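/- Let Λ := ℤ_p⟦T⟧. For a Λ-module M let g_M : M[T] → M/TM denote the composition of the inclusion of the T-torsion submodule M[T] into M with the projection M → M/TM; say M has finite generalized Euler characteristic if the kernel and cokernel of g_M are finite, and in that case set char(M) := |coker g_M| / |ker g_M|. Let M and N be finitely generated torsion Λ-modules and let f : M → N be a Λ-linear map with finite kernel and finite cokernel. Then M has finite generalized Euler characteristic if and only if N does, and in that case char(M) = char(N). -/

import Mathlib

set_option synthInstance.maxHeartbeats 1000000
set_option maxHeartbeats 1000000

open PowerSeries



open LinearMap Submodule

section CardTools

variable {R : Type*} [Ring R] {X Y Z : Type*} [AddCommGroup X] [AddCommGroup Y] [AddCommGroup Z]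
  [Module R X] [Module R Y] [Module R Z]

/-- first isomorphism theorem counting -/
lemma cardG1 (u : X →ₗ[R] Y) :
    Nat.card X = Nat.card (ker u) * Nat.card (range u) := by
  rw [Submodule.card_eq_card_quotient_mul_card (ker u),
    Nat.card_congr u.quotKerEquivRange.toEquiv, mul_comm]

/-- tower lemma -/
lemma cardTower {P Q : Submodule R X} (h : P ≤ Q) :
    Nat.card (X ⧸ P) = Nat.card (X ⧸ Q) * Nat.card (Q.map P.mkQ) := by
  rw [← Submodule.card_quotient_mul_card_quotient Q P h, mul_comm]

lemma card_map_eq_card_quot (u : X →ₗ[R] Y) (P : Submodule R X) :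
    Nat.card (P.map u) = Nat.card (P ⧸ (ker u).comap P.subtype) := by
  have h1 : range (u ∘ₗ P.subtype) = P.map u := by
    rw [range_comp, Submodule.range_subtype]
  have h2 : ker (u ∘ₗ P.subtype) = (ker u).comap P.subtype := by
    rw [ker_comp]
  rw [← h1, ← h2, Nat.card_congr (u ∘ₗ P.subtype).quotKerEquivRange.toEquiv]

lemma card_comap_subtype (P Q : Submodule R X) :
    Nat.card (Q.comap P.subtype) = Nat.card (P ⊓ Q : Submodule R X) := by
  have h : Q.comap P.subtype = (P ⊓ Q).comap P.subtype := by
    ext x; simp [x.2]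
  rw [h, Nat.card_congr (Submodule.comapSubtypeEquivOfLe inf_le_left).toEquiv]

lemma fin_map_of_fin {P : Submodule R X} (u : X →ₗ[R] Y) [Finite P] :
    Finite (P.map u) := by
  have : Function.Surjective (fun x : P => (⟨u x.1, Submodule.mem_map_of_mem x.2⟩ : P.map u)) := by
    rintro ⟨y, x, hx, rfl⟩; exact ⟨⟨x, hx⟩, rfl⟩
  exact Finite.of_surjective _ this

lemma fin_quot_mono {P Q : Submodule R X} (h : P ≤ Q) [Finite (X ⧸ P)] :
    Finite (X ⧸ Q) := by
  have : Function.Surjective (Submodule.mapQ P Q LinearMap.id h) := by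
    intro z
    obtain ⟨x, rfl⟩ := Q.mkQ_surjective z
    exact ⟨P.mkQ x, by simp [Submodule.mapQ_apply]⟩
  exact Finite.of_surjective _ this

lemma card_ne_zero_of_finite (G : Type*) [Zero G] [Finite G] : Nat.card G ≠ 0 :=
  Nat.card_ne_zero.mpr ⟨⟨0⟩, ‹_›⟩

lemma finite_of_card_ne_zero {G : Type*} (h : Nat.card G ≠ 0) : Finite G :=
  (Nat.card_ne_zero.mp h).2

end CardTools

section CompTools

variable {R : Type*} [Ring R] {X Y Z : Type*} [AddCommGroup X] [AddCommGroup Y] [AddCommGroup Z]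
  [Module R X] [Module R Y] [Module R Z]

/-- kernel/cokernel finiteness predicate -/
def FinKC (u : X →ₗ[R] Y) : Prop :=
  Finite (ker u) ∧ Finite (Y ⧸ range u)

/-- the multiplicative index `|coker|/|ker|` -/
noncomputable def qc (u : X →ₗ[R] Y) : ℚ :=
  (Nat.card (Y ⧸ range u) : ℚ) / (Nat.card (ker u) : ℚ)

variable (b : X →ₗ[R] Y) (a : Y →ₗ[R] Z)

lemma mapKerEq : (ker (a ∘ₗ b)).map b = ker a ⊓ range b := by
  ext y
  constructor
  · rintro ⟨x, hx, rfl⟩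
    exact ⟨hx, ⟨x, rfl⟩⟩
  · rintro ⟨hy, x, rfl⟩
    exact ⟨x, hy, rfl⟩

lemma cardF1 :
    Nat.card (ker (a ∘ₗ b)) = Nat.card (ker b) * Nat.card (ker a ⊓ range b : Submodule R Y) := by
  have h := cardG1 (b ∘ₗ (ker (a ∘ₗ b)).subtype)
  have hk : ker (b ∘ₗ (ker (a ∘ₗ b)).subtype) = (ker b).comap (ker (a ∘ₗ b)).subtype :=
    ker_comp _ _
  have hr : range (b ∘ₗ (ker (a ∘ₗ b)).subtype) = ker a ⊓ range b := by
    rw [range_comp, Submodule.range_subtype, mapKerEq]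
  rw [hk, hr] at h
  rw [h, card_comap_subtype]
  congr 2
  rw [inf_eq_right.mpr (ker_le_ker_comp b a)]

lemma cardF2 :
    Nat.card (ker a) = Nat.card (ker a ⊓ range b : Submodule R Y) *
      Nat.card ((ker a).map (range b).mkQ) := by
  have h := cardG1 ((range b).mkQ ∘ₗ (ker a).subtype)
  have hk : ker ((range b).mkQ ∘ₗ (ker a).subtype) = (range b).comap (ker a).subtype := by
    rw [ker_comp, Submodule.ker_mkQ]
  have hr : range ((range b).mkQ ∘ₗ (ker a).subtype) = (ker a).map (range b).mkQ := by
    rw [range_comp, Submodule.range_subtype]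
  rw [hk, hr, card_comap_subtype] at h
  exact h

lemma cardF3 :
    Nat.card (Y ⧸ range b) = Nat.card (Y ⧸ (range b ⊔ ker a)) *
      Nat.card ((ker a).map (range b).mkQ) := by
  have h := cardTower (le_sup_left : range b ≤ range b ⊔ ker a)
  have hm : (range b ⊔ ker a).map (range b).mkQ = (ker a).map (range b).mkQ := by
    rw [Submodule.map_sup, Submodule.mkQ_map_self, bot_sup_eq]
  rw [hm] at h
  exact h

lemma cardF4 :
    Nat.card (Z ⧸ range (a ∘ₗ b)) = Nat.card (Z ⧸ range a) *
      Nat.card ((range a).map (range (a ∘ₗ b)).mkQ) :=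
  cardTower (range_comp_le_range b a)

lemma kerCompMkQ : ker ((range (a ∘ₗ b)).mkQ ∘ₗ a) = range b ⊔ ker a := by
  ext y
  rw [mem_ker, comp_apply, Submodule.mkQ_apply, Submodule.Quotient.mk_eq_zero, mem_range]
  constructor
  · rintro ⟨x, hx⟩
    have : y - b x ∈ ker a := by
      rw [mem_ker, map_sub, ← hx]; simp
    exact Submodule.mem_sup.mpr ⟨b x, ⟨x, rfl⟩, y - b x, this, by abel⟩
  · intro hy
    obtain ⟨w, ⟨x, rfl⟩, k, hk, rfl⟩ := Submodule.mem_sup.mp hy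
    exact ⟨x, by simp [mem_ker.mp hk]⟩

lemma cardF5 :
    Nat.card ((range a).map (range (a ∘ₗ b)).mkQ) = Nat.card (Y ⧸ (range b ⊔ ker a)) := by
  have h := Nat.card_congr ((range (a ∘ₗ b)).mkQ ∘ₗ a).quotKerEquivRange.toEquiv
  have hr : range ((range (a ∘ₗ b)).mkQ ∘ₗ a) = (range a).map (range (a ∘ₗ b)).mkQ :=
    range_comp a ((range (a ∘ₗ b)).mkQ)
  rw [kerCompMkQ, hr] at h
  exact h.symm

/-- grand composition counting identity -/
lemma comp_card :
    Nat.card (Z ⧸ range (a ∘ₗ b)) * (Nat.card (ker a) * Nat.card (ker b)) =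
      Nat.card (ker (a ∘ₗ b)) * (Nat.card (Z ⧸ range a) * Nat.card (Y ⧸ range b)) := by
  rw [cardF1 b a, cardF2 b a, cardF3 b a, cardF4 b a, cardF5 b a]
  ring

end CompTools

section CompFin

variable {R : Type*} [Ring R] {X Y Z : Type*} [AddCommGroup X] [AddCommGroup Y] [AddCommGroup Z]
  [Module R X] [Module R Y] [Module R Z]

variable {b : X →ₗ[R] Y} {a : Y →ₗ[R] Z}

lemma fin_comp (ha : FinKC a) (hb : FinKC b) : FinKC (a ∘ₗ b) := by
  obtain ⟨ha1, ha2⟩ := ha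
  obtain ⟨hb1, hb2⟩ := hb
  constructor
  · apply finite_of_card_ne_zero
    rw [cardF1 b a]
    have h1 : Finite (ker a ⊓ range b : Submodule R Y) :=
      Finite.of_injective _ (Submodule.inclusion_injective
        (inf_le_left : ker a ⊓ range b ≤ ker a))
    exact Nat.mul_ne_zero (card_ne_zero_of_finite _) (card_ne_zero_of_finite _)
  · apply finite_of_card_ne_zero
    rw [cardF4 b a, cardF5 b a]
    have h1 : Finite (Y ⧸ (range b ⊔ ker a)) := fin_quot_mono le_sup_left
    exact Nat.mul_ne_zero (card_ne_zero_of_finite _) (card_ne_zero_of_finite _)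

lemma fin_left (hb : FinKC b) (hab : FinKC (a ∘ₗ b)) : FinKC a := by
  obtain ⟨hb1, hb2⟩ := hb
  obtain ⟨hab1, hab2⟩ := hab
  constructor
  · apply finite_of_card_ne_zero
    rw [cardF2 b a]
    have h1 : Finite (ker a ⊓ range b : Submodule R Y) := by
      rw [← mapKerEq b a]; exact fin_map_of_fin b
    have h2 : Finite ((ker a).map (range b).mkQ) := Subtype.finite
    exact Nat.mul_ne_zero (card_ne_zero_of_finite _) (card_ne_zero_of_finite _)
  · exact fin_quot_mono (range_comp_le_range b a)

lemma fin_right (ha : FinKC a) (hab : FinKC (a ∘ₗ b)) : FinKC b := by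
  obtain ⟨ha1, ha2⟩ := ha
  obtain ⟨hab1, hab2⟩ := hab
  constructor
  · exact Finite.of_injective _ (Submodule.inclusion_injective (ker_le_ker_comp b a))
  · apply finite_of_card_ne_zero
    rw [cardF3 b a]
    have h1 : Finite ((ker a).map (range b).mkQ) := fin_map_of_fin _
    have h2 : Finite (Y ⧸ (range b ⊔ ker a)) := by
      apply finite_of_card_ne_zero
      rw [← cardF5 b a]
      have : Finite ((range a).map (range (a ∘ₗ b)).mkQ) := Subtype.finite
      exact card_ne_zero_of_finite _
    exact Nat.mul_ne_zero (card_ne_zero_of_finite _) (card_ne_zero_of_finite _)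

lemma qc_comp (ha : FinKC a) (hb : FinKC b) : qc (a ∘ₗ b) = qc a * qc b := by
  have hab := fin_comp ha hb
  obtain ⟨ha1, ha2⟩ := ha
  obtain ⟨hb1, hb2⟩ := hb
  obtain ⟨hab1, hab2⟩ := hab
  have key := comp_card b a
  have nka : (Nat.card (ker a) : ℚ) ≠ 0 := Nat.cast_ne_zero.mpr (card_ne_zero_of_finite _)
  have nkb : (Nat.card (ker b) : ℚ) ≠ 0 := Nat.cast_ne_zero.mpr (card_ne_zero_of_finite _)
  have nkab : (Nat.card (ker (a ∘ₗ b)) : ℚ) ≠ 0 := Nat.cast_ne_zero.mpr (card_ne_zero_of_finite _)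
  rw [qc, qc, qc, div_mul_div_comm, div_eq_div_iff nkab (by positivity)]
  have : (Nat.card (Z ⧸ range (a ∘ₗ b)) : ℚ) * (Nat.card (ker a) * Nat.card (ker b)) =
      Nat.card (ker (a ∘ₗ b)) * (Nat.card (Z ⧸ range a) * Nat.card (Y ⧸ range b)) := by
    exact_mod_cast key
  linarith [this]

/-- equality of indices from the cross-multiplied card identity -/
lemma qc_eq_of {X' Y' : Type*} [AddCommGroup X'] [AddCommGroup Y'] [Module R X'] [Module R Y']
    {u : X →ₗ[R] Y} {v : X' →ₗ[R] Y'}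
    (hu : FinKC u) (hv : FinKC v)
    (key : Nat.card (Y ⧸ range u) * Nat.card (ker v) =
      Nat.card (ker u) * Nat.card (Y' ⧸ range v)) : qc u = qc v := by
  obtain ⟨hu1, hu2⟩ := hu
  obtain ⟨hv1, hv2⟩ := hv
  rw [qc, qc, div_eq_div_iff
    (Nat.cast_ne_zero.mpr (card_ne_zero_of_finite _))
    (Nat.cast_ne_zero.mpr (card_ne_zero_of_finite _))]
  rw [mul_comm (Nat.card (Y' ⧸ range v) : ℚ)]
  exact_mod_cast key

lemma qc_ne_zero {u : X →ₗ[R] Y} (hu : FinKC u) : qc u ≠ 0 := by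
  obtain ⟨hu1, hu2⟩ := hu
  rw [qc]
  apply div_ne_zero <;>
    exact Nat.cast_ne_zero.mpr (card_ne_zero_of_finite _)

end CompFin

section TSetup

variable {R : Type*} [CommRing R] (t : R)

variable (M : Type*) [AddCommGroup M] [Module R M]

/-- the torsion submodule `M[t]` -/
noncomputable abbrev KK : Submodule R M := Submodule.torsionBy R M t

/-- the submodule `t·M` -/
noncomputable abbrev TT : Submodule R M :=
  Ideal.span ({t} : Set R) • (⊤ : Submodule R M)

variable {M}

lemma mem_KK {x : M} : x ∈ KK t M ↔ t • x = 0 := Submodule.mem_torsionBy_iff t x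

lemma mem_TT {x : M} : x ∈ TT t M ↔ ∃ m : M, t • m = x := by
  constructor
  · intro hx
    refine Submodule.smul_induction_on hx (fun r hr n _ => ?_) (fun x y hx hy => ?_)
    · obtain ⟨c, rfl⟩ := Ideal.mem_span_singleton'.mp hr
      exact ⟨c • n, by rw [smul_smul, mul_comm]⟩
    · obtain ⟨m1, h1⟩ := hx
      obtain ⟨m2, h2⟩ := hy
      exact ⟨m1 + m2, by rw [smul_add, h1, h2]⟩
  · rintro ⟨m, rfl⟩
    exact Submodule.smul_mem_smul (Ideal.mem_span_singleton_self t) trivial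

variable (M)

/-- the natural map `M[t] → M/tM` -/
noncomputable def gm : (KK t M) →ₗ[R] (M ⧸ TT t M) :=
  (TT t M).mkQ ∘ₗ (KK t M).subtype

variable {M} {M₂ : Type*} [AddCommGroup M₂] [Module R M₂] (u : M →ₗ[R] M₂)

lemma map_mem_KK {x : M} (hx : x ∈ KK t M) : u x ∈ KK t M₂ := by
  rw [mem_KK] at hx ⊢
  rw [← map_smul, hx, map_zero]

lemma le_comap_TT : TT t M ≤ (TT t M₂).comap u := by
  intro x hx
  obtain ⟨m, rfl⟩ := (mem_TT t).mp hx
  exact Submodule.mem_comap.mpr ((mem_TT t).mpr ⟨u m, (map_smul u t m).symm⟩)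

/-- the induced map on `t`-torsion -/
noncomputable def Ku : (KK t M) →ₗ[R] (KK t M₂) :=
  u.restrict (fun x hx => map_mem_KK t u hx)

/-- the induced map on coinvariants -/
noncomputable def Qu : (M ⧸ TT t M) →ₗ[R] (M₂ ⧸ TT t M₂) :=
  Submodule.mapQ _ _ u (le_comap_TT t u)

@[simp] lemma Ku_apply (y : KK t M) : (Ku t u y : M₂) = u y := rfl

@[simp] lemma Qu_apply (x : M) :
    Qu t u (Submodule.Quotient.mk x) = Submodule.Quotient.mk (u x) :=
  Submodule.mapQ_apply _ _ _ x

lemma comm_sq : (Qu t u) ∘ₗ gm t M = gm t M₂ ∘ₗ Ku t u := by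
  ext x
  simp [gm]

end TSetup

section TCount

variable {R : Type*} [CommRing R] (t : R)
variable {M : Type*} [AddCommGroup M] [Module R M]

lemma KK_eq_ker : KK t M = LinearMap.ker (LinearMap.lsmul R M t) := by
  ext x; rw [mem_KK, LinearMap.mem_ker, LinearMap.lsmul_apply]

lemma TT_eq_range : TT t M = LinearMap.range (LinearMap.lsmul R M t) := by
  ext x; rw [mem_TT, LinearMap.mem_range]; simp only [LinearMap.lsmul_apply]

/-- For a finite module the `t`-torsion and `t`-coinvariants have the same cardinality. -/
lemma card_KK_eq_card_coTT [Finite M] :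
    Nat.card (KK t M) = Nat.card (M ⧸ TT t M) := by
  set w := LinearMap.lsmul R M t with hw
  have h1 := cardG1 w
  have h2 := Submodule.card_eq_card_quotient_mul_card (LinearMap.range w)
  have h3 : Nat.card (LinearMap.ker w) * Nat.card (LinearMap.range w) =
      Nat.card (M ⧸ LinearMap.range w) * Nat.card (LinearMap.range w) := by
    rw [← h1, h2]; exact mul_comm _ _
  have hne : 0 < Nat.card (LinearMap.range w) :=
    Nat.pos_of_ne_zero (card_ne_zero_of_finite _)
  have h4 := Nat.eq_of_mul_eq_mul_right hne h3
  rw [KK_eq_ker t, TT_eq_range t, h4]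

end TCount

section SqInj

open LinearMap Submodule

variable {R : Type*} [CommRing R] (t : R)
variable {M M₂ : Type*} [AddCommGroup M] [Module R M] [AddCommGroup M₂] [Module R M₂]
variable (u : M →ₗ[R] M₂)

lemma range_Ku_of_inj (hu : Function.Injective u) :
    range (Ku t u) = (range u).comap (KK t M₂).subtype := by
  ext x
  simp only [mem_range, mem_comap, coe_subtype]
  constructor
  · rintro ⟨y, rfl⟩
    exact ⟨y.1, rfl⟩
  · rintro ⟨m, hm⟩
    have hmK : m ∈ KK t M := by
      rw [mem_KK]
      apply hu
      rw [map_smul, map_zero, hm]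
      exact (mem_KK t).mp x.2
    exact ⟨⟨m, hmK⟩, Subtype.ext hm⟩

lemma sq_inj (hu : Function.Injective u) (hC : Finite (M₂ ⧸ range u)) :
    FinKC (Ku t u) ∧ FinKC (Qu t u) ∧ qc (Ku t u) = qc (Qu t u) := by
  classical
  -- the image of the torsion of M₂ in the cokernel C
  set C := M₂ ⧸ range u with hCdef
  set S : Submodule R C := (KK t M₂).map (range u).mkQ with hS
  -- Step B : card coker Ku = card S
  set σ : (KK t M₂) →ₗ[R] C := (range u).mkQ ∘ₗ (KK t M₂).subtype with hσ
  have hkσ : ker σ = (range u).comap (KK t M₂).subtype := by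
    rw [hσ, ker_comp, Submodule.ker_mkQ]
  have hrσ : LinearMap.range σ = S := by
    rw [hσ, range_comp, Submodule.range_subtype]
  have cardCok : Nat.card ((KK t M₂) ⧸ LinearMap.range (Ku t u)) = Nat.card S := by
    rw [range_Ku_of_inj t u hu, ← hkσ, ← hrσ]
    exact Nat.card_congr σ.quotKerEquivRange.toEquiv
  have hSle : S ≤ KK t C := by
    rintro _ ⟨y, hy, rfl⟩
    rw [mem_KK, Submodule.mkQ_apply, ← Submodule.Quotient.mk_smul, (mem_KK t).mp hy]
    exact Submodule.Quotient.mk_eq_zero _ |>.mpr (zero_mem _)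
  -- Step D : the submodule V and maps d, e'
  set V : Submodule R M₂ := (range u).comap (LinearMap.lsmul R M₂ t) with hV
  have memV : ∀ x : M₂, x ∈ V ↔ t • x ∈ range u := by
    intro x; rw [hV, mem_comap, LinearMap.lsmul_apply]
  set einv : (range u) →ₗ[R] M := (LinearEquiv.ofInjective u hu).symm.toLinearMap with heinv
  have u_einv : ∀ y : range u, u (einv y) = y.1 := by
    intro y
    rw [heinv]
    conv_rhs => rw [← (LinearEquiv.ofInjective u hu).apply_symm_apply y]
    exact (LinearEquiv.ofInjective_apply u ((LinearEquiv.ofInjective u hu).symm y)).symm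
  set inner : V →ₗ[R] (range u) :=
    LinearMap.codRestrict (range u) ((LinearMap.lsmul R M₂ t) ∘ₗ V.subtype)
      (fun x => x.2) with hinner
  have inner_val : ∀ x : V, (inner x : M₂) = t • (x : M₂) := fun x => rfl
  set d : V →ₗ[R] (M ⧸ TT t M) := (TT t M).mkQ ∘ₗ (einv ∘ₗ inner) with hd
  have d_apply : ∀ x : V, d x = Submodule.Quotient.mk (einv (inner x)) := fun x => rfl
  -- Step E : range d = ker Qu
  have hrd : LinearMap.range d = ker (Qu t u) := by
    ext z
    constructor
    · rintro ⟨x, rfl⟩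
      rw [mem_ker, d_apply, Qu_apply, u_einv, inner_val]
      rw [Submodule.Quotient.mk_eq_zero]
      exact (mem_TT t).mpr ⟨(x : M₂), rfl⟩
    · intro hz
      obtain ⟨m, rfl⟩ := (TT t M).mkQ_surjective z
      rw [mem_ker, Submodule.mkQ_apply, Qu_apply, Submodule.Quotient.mk_eq_zero] at hz
      obtain ⟨n, hn⟩ := (mem_TT t).mp hz
      have hnV : n ∈ V := (memV n).mpr (hn ▸ ⟨m, rfl⟩)
      refine ⟨⟨n, hnV⟩, ?_⟩
      rw [d_apply, Submodule.mkQ_apply]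
      congr 1
      apply hu
      rw [u_einv, inner_val, hn]
  -- Step F : ker d
  have hkd : ker d = (KK t M₂ ⊔ range u).comap V.subtype := by
    ext x
    rw [mem_ker, mem_comap, coe_subtype, d_apply, Submodule.Quotient.mk_eq_zero]
    constructor
    · intro hx
      obtain ⟨m, hm⟩ := (mem_TT t).mp hx
      have h1 : u (t • m) = t • (x : M₂) := by
        rw [hm, u_einv, inner_val]
      have h2 : (x : M₂) - u m ∈ KK t M₂ := by
        rw [mem_KK, smul_sub, ← h1, map_smul, sub_self]
      exact Submodule.mem_sup.mpr ⟨(x : M₂) - u m, h2, u m, ⟨m, rfl⟩, by abel⟩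
    · intro hx
      obtain ⟨k, hk, w, ⟨m, rfl⟩, hsum⟩ := Submodule.mem_sup.mp hx
      refine (mem_TT t).mpr ⟨m, ?_⟩
      apply hu
      rw [map_smul, u_einv, inner_val, ← hsum, smul_add, (mem_KK t).mp hk, zero_add]
  -- Step G : the map e' onto the torsion of C
  have he'mem : ∀ x : V, ((range u).mkQ ∘ₗ V.subtype) x ∈ KK t C := by
    intro x
    rw [mem_KK, comp_apply, coe_subtype, Submodule.mkQ_apply, ← Submodule.Quotient.mk_smul,
      Submodule.Quotient.mk_eq_zero]
    exact (memV _).mp x.2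
  set e' : V →ₗ[R] (KK t C) :=
    LinearMap.codRestrict (KK t C) ((range u).mkQ ∘ₗ V.subtype) he'mem with he'
  have e'_surj : Function.Surjective e' := by
    rintro ⟨c, hc⟩
    obtain ⟨n, rfl⟩ := (range u).mkQ_surjective c
    have hnV : n ∈ V := by
      rw [memV]
      rw [mem_KK, Submodule.mkQ_apply, ← Submodule.Quotient.mk_smul,
        Submodule.Quotient.mk_eq_zero] at hc
      exact hc
    exact ⟨⟨n, hnV⟩, Subtype.ext rfl⟩
  have hke' : ker e' = (range u).comap V.subtype := by
    rw [he', LinearMap.ker_codRestrict, ker_comp, Submodule.ker_mkQ]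
  have cardKKC : Nat.card (KK t C) = Nat.card (V ⧸ ker e') :=
    (Nat.card_congr (LinearMap.quotKerEquivOfSurjective e' e'_surj).toEquiv).symm
  -- Step H : tower
  have hle : ker e' ≤ ker d := by
    rw [hke', hkd]
    exact Submodule.comap_mono le_sup_right
  have tower := cardTower hle
  -- Step I : card of mapped submodule
  have hI : Nat.card ((ker d).map (ker e').mkQ) = Nat.card ((ker d).map e') := by
    rw [card_map_eq_card_quot, card_map_eq_card_quot, Submodule.ker_mkQ]
  -- Step J : (ker d).map e' = S.comap (KK t C).subtype
  have hJ : (ker d).map e' = S.comap (KK t C).subtype := by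
    ext c
    simp only [mem_map, mem_comap, coe_subtype]
    constructor
    · rintro ⟨x, hxd, rfl⟩
      rw [hkd, mem_comap, coe_subtype] at hxd
      obtain ⟨k, hk, w, ⟨m, rfl⟩, hsum⟩ := Submodule.mem_sup.mp hxd
      refine ⟨k, hk, ?_⟩
      have : ((e' x : KK t C) : C) = Submodule.Quotient.mk (x : M₂) := rfl
      rw [this, ← hsum, ← Submodule.mkQ_apply, map_add, Submodule.mkQ_apply, Submodule.mkQ_apply]
      have : (Submodule.Quotient.mk (u m) : C) = 0 := by
        rw [Submodule.Quotient.mk_eq_zero]; exact ⟨m, rfl⟩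
      rw [this, add_zero]
    · rintro ⟨y, hy, hyc⟩
      have hyV : y ∈ V := by
        rw [memV, (mem_KK t).mp hy]
        exact zero_mem _
      have hyd : (⟨y, hyV⟩ : V) ∈ ker d := by
        rw [hkd, mem_comap, coe_subtype]
        exact Submodule.mem_sup_left hy
      exact ⟨⟨y, hyV⟩, hyd, Subtype.ext hyc⟩
  -- Step K
  have hK : Nat.card (S.comap (KK t C).subtype) = Nat.card S := by
    rw [card_comap_subtype, inf_eq_right.mpr hSle]
  -- combine : card (KK t C) = card (ker Qu) * card S
  have cardVd : Nat.card (V ⧸ ker d) = Nat.card (ker (Qu t u)) := by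
    rw [← hrd]
    exact Nat.card_congr d.quotKerEquivRange.toEquiv
  have main1 : Nat.card (KK t C) = Nat.card (ker (Qu t u)) * Nat.card S := by
    rw [cardKKC, tower, cardVd, hI, hJ, hK]
  -- Step L : card coker Qu = card (C ⧸ TT t C)
  set ρ : M₂ →ₗ[R] ((M₂ ⧸ TT t M₂) ⧸ LinearMap.range (Qu t u)) :=
    (LinearMap.range (Qu t u)).mkQ ∘ₗ (TT t M₂).mkQ with hρ
  set θ : M₂ →ₗ[R] (C ⧸ TT t C) := (TT t C).mkQ ∘ₗ (range u).mkQ with hθ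
  have ρ_surj : Function.Surjective ρ :=
    (LinearMap.range (Qu t u)).mkQ_surjective.comp (TT t M₂).mkQ_surjective
  have θ_surj : Function.Surjective θ :=
    (TT t C).mkQ_surjective.comp (range u).mkQ_surjective
  have hkρ : ker ρ = range u ⊔ TT t M₂ := by
    ext x
    rw [mem_ker, hρ, comp_apply, Submodule.mkQ_apply, Submodule.mkQ_apply,
      Submodule.Quotient.mk_eq_zero]
    constructor
    · rintro ⟨z, hz⟩
      obtain ⟨m, rfl⟩ := (TT t M).mkQ_surjective z
      rw [Submodule.mkQ_apply, Qu_apply] at hz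
      have : x - u m ∈ TT t M₂ := by
        rw [← Submodule.Quotient.eq]
        exact hz.symm
      exact Submodule.mem_sup.mpr ⟨u m, ⟨m, rfl⟩, x - u m, this, by abel⟩
    · intro hx
      obtain ⟨w, ⟨m, rfl⟩, z, hz, hsum⟩ := Submodule.mem_sup.mp hx
      refine ⟨Submodule.Quotient.mk m, ?_⟩
      rw [Qu_apply, ← hsum]
      exact (Submodule.Quotient.eq _).mpr (by simpa using neg_mem hz)
  have hkθ : ker θ = range u ⊔ TT t M₂ := by
    ext x
    rw [mem_ker, hθ, comp_apply, Submodule.mkQ_apply, Submodule.mkQ_apply,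
      Submodule.Quotient.mk_eq_zero]
    constructor
    · intro hx
      obtain ⟨c, hc⟩ := (mem_TT t).mp hx
      obtain ⟨n, rfl⟩ := (range u).mkQ_surjective c
      rw [Submodule.mkQ_apply, ← Submodule.Quotient.mk_smul] at hc
      have : x - t • n ∈ range u := by
        rw [← Submodule.Quotient.eq]
        exact hc.symm
      refine Submodule.mem_sup.mpr ⟨x - t • n, this, t • n, (mem_TT t).mpr ⟨n, rfl⟩, by abel⟩
    · intro hx
      obtain ⟨w, hw, z, hz, hsum⟩ := Submodule.mem_sup.mp hx
      obtain ⟨n, rfl⟩ := (mem_TT t).mp hz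
      refine (mem_TT t).mpr ⟨Submodule.Quotient.mk n, ?_⟩
      rw [← Submodule.Quotient.mk_smul, ← hsum]
      exact (Submodule.Quotient.eq _).mpr (by simpa using neg_mem hw)
  have cardCokQu : Nat.card ((M₂ ⧸ TT t M₂) ⧸ LinearMap.range (Qu t u)) =
      Nat.card (C ⧸ TT t C) := by
    have e1 := Nat.card_congr (LinearMap.quotKerEquivOfSurjective ρ ρ_surj).toEquiv
    have e2 := Nat.card_congr (LinearMap.quotKerEquivOfSurjective θ θ_surj).toEquiv
    rw [← e1, ← e2, hkρ, hkθ]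
  -- Step M : ker Ku is trivial
  have hKuInj : Function.Injective (Ku t u) := by
    intro x y hxy
    apply Subtype.ext
    apply hu
    have := congrArg (Subtype.val) hxy
    simpa using this
  have cardKerKu : Nat.card (ker (Ku t u)) = 1 := by
    rw [LinearMap.ker_eq_bot.mpr hKuInj]
    exact Nat.card_unique
  -- finiteness
  have finS : Finite S := Subtype.finite
  have finKKC : Finite (KK t C) := Subtype.finite
  have finCokKu : Finite ((KK t M₂) ⧸ LinearMap.range (Ku t u)) := by
    apply finite_of_card_ne_zero
    rw [cardCok]
    exact card_ne_zero_of_finite _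
  have finKerQu : Finite (ker (Qu t u)) := by
    apply finite_of_card_ne_zero
    intro h0
    have := main1
    rw [h0, zero_mul] at this
    exact card_ne_zero_of_finite (KK t C) this
  have finCTT : Finite (C ⧸ TT t C) := Finite.of_surjective _ (TT t C).mkQ_surjective
  have finCokQu : Finite ((M₂ ⧸ TT t M₂) ⧸ LinearMap.range (Qu t u)) := by
    apply finite_of_card_ne_zero
    rw [cardCokQu]
    exact card_ne_zero_of_finite _
  have finKerKu : Finite (ker (Ku t u)) := by
    apply finite_of_card_ne_zero
    rw [cardKerKu]
    exact one_ne_zero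
  have fKu : FinKC (Ku t u) := ⟨finKerKu, finCokKu⟩
  have fQu : FinKC (Qu t u) := ⟨finKerQu, finCokQu⟩
  have key : Nat.card ((KK t M₂) ⧸ LinearMap.range (Ku t u)) * Nat.card (ker (Qu t u)) =
      Nat.card (ker (Ku t u)) * Nat.card ((M₂ ⧸ TT t M₂) ⧸ LinearMap.range (Qu t u)) := by
    rw [cardCok, cardKerKu, cardCokQu, one_mul, ← card_KK_eq_card_coTT t, main1, mul_comm]
  exact ⟨fKu, fQu, qc_eq_of fKu fQu key⟩

end SqInj

section SqSurj

open LinearMap Submodule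

variable {R : Type*} [CommRing R] (t : R)
variable {M M₂ : Type*} [AddCommGroup M] [Module R M] [AddCommGroup M₂] [Module R M₂]
variable (u : M →ₗ[R] M₂)

lemma sq_surj (hu : Function.Surjective u) (hA : Finite (ker u)) :
    FinKC (Ku t u) ∧ FinKC (Qu t u) ∧ qc (Ku t u) = qc (Qu t u) := by
  classical
  set A := ker u with hAdef
  set τA : A →ₗ[R] A := LinearMap.lsmul R A t with hτA
  have τA_val : ∀ a : A, ((τA a : A) : M) = t • (a : M) := fun a => rfl
  -- card ker Ku = card ker τA
  have eK : Nat.card (ker (Ku t u)) = Nat.card (ker τA) := by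
    refine Nat.card_congr ⟨fun x => ⟨⟨x.1.1, ?_⟩, ?_⟩, fun y => ⟨⟨y.1.1, ?_⟩, ?_⟩, ?_, ?_⟩
    · rw [hAdef, mem_ker]
      have hx : Ku t u x.1 = 0 := x.2
      exact congrArg (Subtype.val) hx
    · rw [mem_ker]
      apply Subtype.ext
      show t • (x.1.1 : M) = 0
      exact (mem_KK t).mp x.1.2
    · refine (mem_KK t).mpr ?_
      have hy : τA y.1 = 0 := y.2
      exact congrArg (Subtype.val) hy
    · rw [mem_ker]
      apply Subtype.ext
      show u y.1.1 = 0
      exact y.1.2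
    · intro x; rfl
    · intro y; rfl
  -- the submodule P
  set P : Submodule R M := A.comap (LinearMap.lsmul R M t) with hP
  have memP : ∀ x : M, x ∈ P ↔ u (t • x) = 0 := by
    intro x
    rw [hP, mem_comap, LinearMap.lsmul_apply, hAdef, mem_ker]
  set inner2 : P →ₗ[R] A :=
    LinearMap.codRestrict A ((LinearMap.lsmul R M t) ∘ₗ P.subtype) (fun x => x.2) with hinner2
  have inner2_val : ∀ x : P, ((inner2 x : A) : M) = t • (x : M) := fun x => rfl
  set δ : P →ₗ[R] (A ⧸ LinearMap.range τA) := (LinearMap.range τA).mkQ ∘ₗ inner2 with hδ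
  have δ_apply : ∀ x : P, δ x = Submodule.Quotient.mk (inner2 x) := fun x => rfl
  -- kernel of δ
  have hkδ : ker δ = (KK t M ⊔ A).comap P.subtype := by
    ext x
    rw [mem_ker, mem_comap, coe_subtype, δ_apply, Submodule.Quotient.mk_eq_zero]
    constructor
    · rintro ⟨a, ha⟩
      have hval : t • (a : M) = t • (x : M) := by
        have := congrArg (Subtype.val) ha
        simpa [τA_val, inner2_val] using this
      have h2 : (x : M) - (a : M) ∈ KK t M := by
        rw [mem_KK, smul_sub, hval, sub_self]
      exact Submodule.mem_sup.mpr ⟨(x : M) - a, h2, a, a.2, by abel⟩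
    · intro hx
      obtain ⟨k, hk, a, ha, hsum⟩ := Submodule.mem_sup.mp hx
      refine ⟨⟨a, ha⟩, ?_⟩
      apply Subtype.ext
      rw [τA_val, inner2_val, ← hsum, smul_add, (mem_KK t).mp hk, zero_add]
  -- the map g₁ : P → KK t M₂
  have g₁mem : ∀ x : P, (u ∘ₗ P.subtype) x ∈ KK t M₂ := by
    intro x
    rw [mem_KK, comp_apply, coe_subtype, ← map_smul]
    exact (memP _).mp x.2
  set g₁ : P →ₗ[R] (KK t M₂) := LinearMap.codRestrict (KK t M₂) (u ∘ₗ P.subtype) g₁mem with hg₁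
  have g₁_val : ∀ x : P, ((g₁ x : KK t M₂) : M₂) = u (x : M) := fun x => rfl
  have g₁_surj : Function.Surjective g₁ := by
    rintro ⟨b, hb⟩
    obtain ⟨m, rfl⟩ := hu b
    have hm : m ∈ P := by
      rw [memP, map_smul]
      exact (mem_KK t).mp hb
    exact ⟨⟨m, hm⟩, Subtype.ext rfl⟩
  set h₁ : P →ₗ[R] ((KK t M₂) ⧸ LinearMap.range (Ku t u)) :=
    (LinearMap.range (Ku t u)).mkQ ∘ₗ g₁ with hh₁
  have h₁_surj : Function.Surjective h₁ :=
    (LinearMap.range (Ku t u)).mkQ_surjective.comp g₁_surj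
  have hkh₁ : ker h₁ = (KK t M ⊔ A).comap P.subtype := by
    ext x
    rw [mem_ker, hh₁, comp_apply, Submodule.mkQ_apply, Submodule.Quotient.mk_eq_zero,
      mem_comap, coe_subtype]
    constructor
    · rintro ⟨y, hy⟩
      have hval : u (y : M) = u (x : M) := by
        have := congrArg (Subtype.val) hy
        simpa [g₁_val] using this
      have h2 : (x : M) - (y : M) ∈ A := by
        rw [hAdef, mem_ker, map_sub, hval, sub_self]
      exact Submodule.mem_sup.mpr ⟨(y : M), y.2, (x : M) - y, h2, by abel⟩
    · intro hx
      obtain ⟨k, hk, a, ha, hsum⟩ := Submodule.mem_sup.mp hx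
      refine ⟨⟨k, hk⟩, ?_⟩
      apply Subtype.ext
      rw [g₁_val]
      show u k = u (x : M)
      rw [← hsum, map_add]
      have : u a = 0 := ha
      rw [this, add_zero]
  -- card coker Ku = card range δ
  have cardCokKu : Nat.card ((KK t M₂) ⧸ LinearMap.range (Ku t u)) =
      Nat.card (LinearMap.range δ) := by
    have e1 := Nat.card_congr (LinearMap.quotKerEquivOfSurjective h₁ h₁_surj).toEquiv
    have e2 := Nat.card_congr δ.quotKerEquivRange.toEquiv
    rw [← e1, hkh₁, ← hkδ, e2]
  -- range δ as image of Z2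
  set Z2 : Submodule R A := (TT t M).comap A.subtype with hZ2
  have hrangeδ : LinearMap.range δ = Z2.map (LinearMap.range τA).mkQ := by
    ext z
    constructor
    · rintro ⟨x, rfl⟩
      refine ⟨inner2 x, ?_, rfl⟩
      simp only [SetLike.mem_coe, hZ2, mem_comap, coe_subtype, inner2_val]
      exact (mem_TT t).mpr ⟨(x : M), rfl⟩
    · rintro ⟨w, hw, rfl⟩
      simp only [SetLike.mem_coe, hZ2, mem_comap, coe_subtype] at hw
      obtain ⟨m, hm⟩ := (mem_TT t).mp hw
      have hmP : m ∈ P := by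
        rw [memP, hm]
        exact w.2
      refine ⟨⟨m, hmP⟩, ?_⟩
      rw [δ_apply, Submodule.mkQ_apply]
      congr 1
      exact Subtype.ext (by rw [inner2_val]; exact hm)
  -- kernel of Qu
  set W' : Submodule R M := (TT t M₂).comap u with hW'def
  have hW' : W' = TT t M ⊔ A := by
    ext x
    rw [hW'def, mem_comap]
    constructor
    · intro hx
      obtain ⟨n, hn⟩ := (mem_TT t).mp hx
      obtain ⟨m, rfl⟩ := hu n
      have h2 : x - t • m ∈ A := by
        rw [hAdef, mem_ker, map_sub, map_smul, hn, sub_self]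
      exact Submodule.mem_sup.mpr ⟨t • m, (mem_TT t).mpr ⟨m, rfl⟩, x - t • m, h2, by abel⟩
    · intro hx
      obtain ⟨w, hw, a, ha, hsum⟩ := Submodule.mem_sup.mp hx
      obtain ⟨m, rfl⟩ := (mem_TT t).mp hw
      rw [← hsum, map_add, map_smul]
      have : u a = 0 := ha
      rw [this, add_zero]
      exact (mem_TT t).mpr ⟨u m, rfl⟩
  have hkerQu : ker (Qu t u) = W'.map (TT t M).mkQ := by
    ext z
    obtain ⟨m, rfl⟩ := (TT t M).mkQ_surjective z
    rw [mem_ker, Submodule.mkQ_apply, Qu_apply, Submodule.Quotient.mk_eq_zero]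
    constructor
    · intro hm
      exact ⟨m, Submodule.mem_comap.mpr hm, rfl⟩
    · rintro ⟨w, hw, hwm⟩
      rw [Submodule.mkQ_apply] at hwm
      have hdiff : m - w ∈ TT t M := by
        rw [← Submodule.Quotient.eq]
        exact hwm.symm
      have hmW : m ∈ W' := by
        have : m = w + (m - w) := by abel
        rw [this]
        exact add_mem hw (le_comap_TT t u hdiff)
      exact Submodule.mem_comap.mp hmW
  have cardKerQu : Nat.card (ker (Qu t u)) = Nat.card (A ⧸ Z2) := by
    have e1 : Nat.card (ker (Qu t u)) = Nat.card (W'.map (TT t M).mkQ) := by rw [hkerQu]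
    rw [e1, card_map_eq_card_quot, Submodule.ker_mkQ]
    have e2 := Nat.card_congr (LinearMap.quotientInfEquivSupQuotient A (TT t M)).toEquiv
    have hsup : A ⊔ TT t M = W' := by rw [hW', sup_comm]
    have hinf : (A ⊓ TT t M).comap A.subtype = Z2 := by
      ext a
      simp only [mem_comap, coe_subtype, mem_inf, hZ2]
      exact ⟨fun h => h.2, fun h => ⟨a.2, h⟩⟩
    rw [hsup, ← Submodule.comap_inf, hinf] at e2
    rw [← e2]
  have finAZ2 : Finite (A ⧸ Z2) := Finite.of_surjective _ Z2.mkQ_surjective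
  -- tower in A
  have hZle : LinearMap.range τA ≤ Z2 := by
    rintro _ ⟨a, rfl⟩
    rw [hZ2, mem_comap, coe_subtype, τA_val]
    exact (mem_TT t).mpr ⟨(a : M), rfl⟩
  have towerA := cardTower hZle
  -- finite module cancellation
  have cardAq : Nat.card (A ⧸ LinearMap.range τA) = Nat.card (ker τA) := by
    have h := card_KK_eq_card_coTT t (M := A)
    rw [KK_eq_ker t, TT_eq_range t] at h
    rw [← hτA] at h
    rw [← h]
  -- main identity
  have main1 : Nat.card ((KK t M₂) ⧸ LinearMap.range (Ku t u)) * Nat.card (ker (Qu t u)) =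
      Nat.card (ker (Ku t u)) := by
    rw [cardCokKu, cardKerQu, hrangeδ, eK, ← cardAq, towerA, mul_comm]
  -- Qu is surjective
  have Qu_surj : Function.Surjective (Qu t u) := by
    intro z
    obtain ⟨n, rfl⟩ := (TT t M₂).mkQ_surjective z
    obtain ⟨m, rfl⟩ := hu n
    exact ⟨Submodule.Quotient.mk m, by rw [Submodule.mkQ_apply, Qu_apply]⟩
  have cardCokQu : Nat.card ((M₂ ⧸ TT t M₂) ⧸ LinearMap.range (Qu t u)) = 1 := by
    haveI : Subsingleton ((M₂ ⧸ TT t M₂) ⧸ LinearMap.range (Qu t u)) :=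
      Submodule.Quotient.subsingleton_iff.mpr (range_eq_top.mpr Qu_surj)
    exact Nat.card_of_subsingleton 0
  -- finiteness
  have finAq : Finite (A ⧸ LinearMap.range τA) :=
    Finite.of_surjective _ (LinearMap.range τA).mkQ_surjective
  have finKerKu : Finite (ker (Ku t u)) := by
    apply finite_of_card_ne_zero
    rw [eK]
    exact card_ne_zero_of_finite _
  have finCokKu : Finite ((KK t M₂) ⧸ LinearMap.range (Ku t u)) := by
    apply finite_of_card_ne_zero
    rw [cardCokKu]
    exact card_ne_zero_of_finite _
  have finKerQu : Finite (ker (Qu t u)) := by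
    apply finite_of_card_ne_zero
    rw [cardKerQu]
    exact card_ne_zero_of_finite _
  have finCokQu : Finite ((M₂ ⧸ TT t M₂) ⧸ LinearMap.range (Qu t u)) := by
    apply finite_of_card_ne_zero
    rw [cardCokQu]
    exact one_ne_zero
  have fKu : FinKC (Ku t u) := ⟨finKerKu, finCokKu⟩
  have fQu : FinKC (Qu t u) := ⟨finKerQu, finCokQu⟩
  have key : Nat.card ((KK t M₂) ⧸ LinearMap.range (Ku t u)) * Nat.card (ker (Qu t u)) =
      Nat.card (ker (Ku t u)) * Nat.card ((M₂ ⧸ TT t M₂) ⧸ LinearMap.range (Qu t u)) := by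
    rw [main1, cardCokQu, mul_one]
  exact ⟨fKu, fQu, qc_eq_of fKu fQu key⟩

end SqSurj

section Main

open LinearMap Submodule

variable {R : Type*} [CommRing R] (t : R)
variable {M N : Type*} [AddCommGroup M] [Module R M] [AddCommGroup N] [Module R N]

lemma pseudo_sq (f : M →ₗ[R] N) (hker : Finite (ker f)) (hcoker : Finite (N ⧸ range f)) :
    FinKC (Ku t f) ∧ FinKC (Qu t f) ∧ qc (Ku t f) = qc (Qu t f) := by
  classical
  set u₁ : M →ₗ[R] (range f) := f.rangeRestrict with hu₁def
  set u₂ : (range f) →ₗ[R] N := (range f).subtype with hu₂def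
  have hu₁surj : Function.Surjective u₁ := f.surjective_rangeRestrict
  have hu₁ker : Finite (ker u₁) := by
    rw [hu₁def, LinearMap.ker_rangeRestrict]
    exact hker
  have hu₂inj : Function.Injective u₂ := (range f).injective_subtype
  have hu₂cok : Finite (N ⧸ range u₂) := by
    rw [hu₂def, Submodule.range_subtype]
    exact hcoker
  obtain ⟨fK1, fQ1, hq1⟩ := sq_surj t u₁ hu₁surj hu₁ker
  obtain ⟨fK2, fQ2, hq2⟩ := sq_inj t u₂ hu₂inj hu₂cok
  have hKcomp : Ku t f = (Ku t u₂) ∘ₗ (Ku t u₁) := by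
    apply LinearMap.ext
    intro x
    apply Subtype.ext
    rfl
  have hQcomp : Qu t f = (Qu t u₂) ∘ₗ (Qu t u₁) := by
    apply Submodule.linearMap_qext
    apply LinearMap.ext
    intro m
    show Qu t f (Submodule.Quotient.mk m) = Qu t u₂ (Qu t u₁ (Submodule.Quotient.mk m))
    rw [Qu_apply, Qu_apply, Qu_apply]
    rfl
  have fKf : FinKC (Ku t f) := by rw [hKcomp]; exact fin_comp fK2 fK1
  have fQf : FinKC (Qu t f) := by rw [hQcomp]; exact fin_comp fQ2 fQ1
  refine ⟨fKf, fQf, ?_⟩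
  rw [hKcomp, hQcomp, qc_comp fK2 fK1, qc_comp fQ2 fQ1, hq1, hq2]

theorem main_general (f : M →ₗ[R] N) (hker : Finite (ker f)) (hcoker : Finite (N ⧸ range f)) :
    (FinKC (gm t M) ↔ FinKC (gm t N)) ∧
      (FinKC (gm t M) → qc (gm t M) = qc (gm t N)) := by
  obtain ⟨fK, fQ, hq⟩ := pseudo_sq t f hker hcoker
  have hcomm : (Qu t f) ∘ₗ gm t M = gm t N ∘ₗ Ku t f := comm_sq t f
  have hiff : FinKC (gm t M) ↔ FinKC (gm t N) := by
    constructor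
    · intro hM
      have h1 : FinKC ((Qu t f) ∘ₗ gm t M) := fin_comp fQ hM
      rw [hcomm] at h1
      exact fin_left fK h1
    · intro hN
      have h2 : FinKC (gm t N ∘ₗ Ku t f) := fin_comp hN fK
      rw [← hcomm] at h2
      exact fin_right fQ h2
  refine ⟨hiff, fun hM => ?_⟩
  have hN := hiff.mp hM
  have q1 : qc ((Qu t f) ∘ₗ gm t M) = qc (Qu t f) * qc (gm t M) := qc_comp fQ hM
  have q2 : qc (gm t N ∘ₗ Ku t f) = qc (gm t N) * qc (Ku t f) := qc_comp hN fK
  rw [hcomm, q2, hq] at q1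
  have q3 : qc (Qu t f) * qc (gm t N) = qc (Qu t f) * qc (gm t M) := by
    rw [mul_comm] at q1
    rw [q1, mul_comm]
  exact (mul_left_cancel₀ (qc_ne_zero fQ) q3).symm

end Main


/-- The submodule `T·M` of a module `M` over `Λ = ℤ_p⟦T⟧`. -/
noncomputable def TM (p : ℕ) [Fact p.Prime] (M : Type*) [AddCommGroup M]
    [Module (PowerSeries ℤ_[p]) M] : Submodule (PowerSeries ℤ_[p]) M :=
  Ideal.span ({PowerSeries.X} : Set (PowerSeries ℤ_[p])) •
    (⊤ : Submodule (PowerSeries ℤ_[p]) M)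

/-- The natural map `g_M : M[T] → M/TM`, the composition of the inclusion of the
`T`-torsion submodule with the projection onto the `T`-coinvariants. -/
noncomputable def gMap (p : ℕ) [Fact p.Prime] (M : Type*) [AddCommGroup M]
    [Module (PowerSeries ℤ_[p]) M] :
    (Submodule.torsionBy (PowerSeries ℤ_[p]) M PowerSeries.X) →ₗ[PowerSeries ℤ_[p]]
      (M ⧸ TM p M) :=
  (TM p M).mkQ ∘ₗ (Submodule.torsionBy (PowerSeries ℤ_[p]) M PowerSeries.X).subtype

/-- `M` has finite generalized Euler characteristic if `g_M` has finite kernel and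
cokernel. -/
def HasFiniteEuler (p : ℕ) [Fact p.Prime] (M : Type*) [AddCommGroup M]
    [Module (PowerSeries ℤ_[p]) M] : Prop :=
  Finite (LinearMap.ker (gMap p M)) ∧
    Finite ((M ⧸ TM p M) ⧸ LinearMap.range (gMap p M))

/-- The generalized Euler characteristic `char(M) = |coker g_M| / |ker g_M|`. -/
noncomputable def eulerChar (p : ℕ) [Fact p.Prime] (M : Type*) [AddCommGroup M]
    [Module (PowerSeries ℤ_[p]) M] : ℚ :=
  (Nat.card ((M ⧸ TM p M) ⧸ LinearMap.range (gMap p M)) : ℚ) /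
    (Nat.card (LinearMap.ker (gMap p M)) : ℚ)

lemma gMap_eq_gm (p : ℕ) [Fact p.Prime] (M : Type*) [AddCommGroup M]
    [Module (PowerSeries ℤ_[p]) M] : gMap p M = gm (PowerSeries.X : PowerSeries ℤ_[p]) M := rfl

lemma hasFiniteEuler_iff_FinKC (p : ℕ) [Fact p.Prime] (M : Type*) [AddCommGroup M]
    [Module (PowerSeries ℤ_[p]) M] :
    HasFiniteEuler p M ↔ FinKC (gm (PowerSeries.X : PowerSeries ℤ_[p]) M) := Iff.rfl

lemma eulerChar_eq_qc (p : ℕ) [Fact p.Prime] (M : Type*) [AddCommGroup M]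
    [Module (PowerSeries ℤ_[p]) M] : eulerChar p M = qc (gm (PowerSeries.X : PowerSeries ℤ_[p]) M) := rfl

/-- If `M`, `N` are finitely generated torsion modules over `Λ = ℤ_p⟦T⟧` and `f : M → N`
is `Λ`-linear with finite kernel and cokernel, then `M` has finite generalized Euler
characteristic iff `N` does, and in that case `char(M) = char(N)`. -/
theorem stmt_13 (p : ℕ) [Fact p.Prime] (M N : Type*)
    [AddCommGroup M] [Module (PowerSeries ℤ_[p]) M] [Module.Finite (PowerSeries ℤ_[p]) M]
    [AddCommGroup N] [Module (PowerSeries ℤ_[p]) N] [Module.Finite (PowerSeries ℤ_[p]) N]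
    (hM : Module.IsTorsion (PowerSeries ℤ_[p]) M)
    (hN : Module.IsTorsion (PowerSeries ℤ_[p]) N)
    (f : M →ₗ[PowerSeries ℤ_[p]] N)
    (hker : Finite (LinearMap.ker f)) (hcoker : Finite (N ⧸ LinearMap.range f)) :
    (HasFiniteEuler p M ↔ HasFiniteEuler p N) ∧
    (HasFiniteEuler p M → eulerChar p M = eulerChar p N) := by
  obtain ⟨h1, h2⟩ := main_general (PowerSeries.X : PowerSeries ℤ_[p]) f hker hcoker
  constructor
  · rw [hasFiniteEuler_iff_FinKC, hasFiniteEuler_iff_FinKC]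
    exact h1
  · intro hfe
    rw [eulerChar_eq_qc, eulerChar_eq_qc]
    exact h2 ((hasFiniteEuler_iff_FinKC p M).mp hfe)
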